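/- Combining the tangent bounds Γ(x)/Γ(n+x) ≥ Γ(x̂)/Γ(n+x̂)·e^{(x̂−x)b} (b = ψ(n+x̂)−ψ(x̂)) applied at x = α₀ and Γ(n+x)/Γ(x) ≥ c·x^a applied at each x = α_j, the Dirichlet-Multinomial log-likelihood log p(c|n,α) is bounded below by a function of the form D + (1 − α₀)·b + Σⱼ aⱼ log αⱼ, with equality at α = α̂, where aⱼ = (ψ(c_j + α̂_j) − ψ(α̂_j))·α̂_j, b = ψ(n + α̂₀) − ψ(α̂₀), and D does not depend on α. -/

import Mathlib

open Finset

/-- The digamma function `ψ = Γ'/Γ = (log Γ)'`. -/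
noncomputable def digamma (x : ℝ) : ℝ := deriv (fun y => Real.log (Real.Gamma y)) x

lemma gamma_nat_add (n : ℕ) {x : ℝ} (hx : 0 < x) :
    Real.Gamma ((n : ℝ) + x) = (∏ k ∈ range n, (x + k)) * Real.Gamma x := by
  induction n with
  | zero => simp
  | succ m ih =>
    have h1 : ((m : ℝ) + x) ≠ 0 := by positivity
    have : ((m + 1 : ℕ) : ℝ) + x = ((m : ℝ) + x) + 1 := by push_cast; ring
    rw [this, Real.Gamma_add_one h1, ih, prod_range_succ]
    ring

lemma log_gamma_nat_add (n : ℕ) {x : ℝ} (hx : 0 < x) :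
    Real.log (Real.Gamma ((n : ℝ) + x))
      = (∑ k ∈ range n, Real.log (x + k)) + Real.log (Real.Gamma x) := by
  rw [gamma_nat_add n hx, Real.log_mul, Real.log_prod]
  · intro k _; positivity
  · exact ne_of_gt (prod_pos fun k _ => by positivity)
  · exact (Real.Gamma_pos_of_pos hx).ne'

lemma diffAt_logGamma {x : ℝ} (hx : 0 < x) :
    DifferentiableAt ℝ (fun y => Real.log (Real.Gamma y)) x := by
  refine (Real.differentiableAt_Gamma fun m => ?_).log (Real.Gamma_pos_of_pos hx).ne'
  have : (0:ℝ) ≤ m := Nat.cast_nonneg m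
  linarith

lemma digamma_rec (n : ℕ) {x : ℝ} (hx : 0 < x) :
    digamma ((n : ℝ) + x) = digamma x + ∑ k ∈ range n, 1 / (x + k) := by
  have hnx : (0:ℝ) < (n : ℝ) + x := by positivity
  have hF : HasDerivAt (fun y => Real.log (Real.Gamma ((n:ℝ) + y)))
      (digamma ((n:ℝ) + x) * 1) x :=
    ((diffAt_logGamma hnx).hasDerivAt).comp x ((hasDerivAt_id x).const_add (n:ℝ))
  have hG : HasDerivAt (fun y => Real.log (Real.Gamma y) + ∑ k ∈ range n, Real.log (y + k))
      (digamma x + ∑ k ∈ range n, 1 / (x + k)) x := by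
    refine ((diffAt_logGamma hx).hasDerivAt).add (HasDerivAt.fun_sum fun k _ => ?_)
    have h0 : x + (k:ℝ) ≠ 0 := by positivity
    simpa using ((hasDerivAt_id x).add_const (k:ℝ)).log h0
  have heq : (fun y => Real.log (Real.Gamma ((n:ℝ) + y)))
      =ᶠ[nhds x] (fun y => Real.log (Real.Gamma y) + ∑ k ∈ range n, Real.log (y + k)) := by
    filter_upwards [Ioi_mem_nhds hx] with y hy
    rw [log_gamma_nat_add n hy]; ring
  have hF' : HasDerivAt (fun y => Real.log (Real.Gamma ((n:ℝ) + y)))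
      (digamma x + ∑ k ∈ range n, 1 / (x + k)) x := hG.congr_of_eventuallyEq heq
  have := hF.unique hF'
  linarith

lemma tangent_upper {x y : ℝ} (hx : 0 < x) (hy : 0 < y) {k : ℝ} (hk : 0 ≤ k) :
    Real.log (y + k) ≤ Real.log (x + k) + (y - x) / (x + k) := by
  have hxk : (0:ℝ) < x + k := by linarith
  have hyk : (0:ℝ) < y + k := by linarith
  have h := Real.log_le_sub_one_of_pos (div_pos hyk hxk)
  rw [Real.log_div hyk.ne' hxk.ne'] at h
  have h2 : (y + k) / (x + k) - 1 = (y - x) / (x + k) := by field_simp; ring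
  rw [h2] at h
  linarith

lemma tangent_lower {x y : ℝ} (hx : 0 < x) (hy : 0 < y) {k : ℝ} (hk : 0 ≤ k) :
    Real.log (x + k) + (x / (x + k)) * (Real.log y - Real.log x) ≤ Real.log (y + k) := by
  have hxk : (0:ℝ) < x + k := by linarith
  have hyk : (0:ℝ) < y + k := by linarith
  have hlam : (0:ℝ) ≤ x / (x + k) := by positivity
  have hmu : (0:ℝ) ≤ k / (x + k) := by positivity
  have hsum : x / (x + k) + k / (x + k) = 1 := by field_simp
  have hr : y / x ∈ Set.Ioi (0:ℝ) := Set.mem_Ioi.mpr (div_pos hy hx)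
  have h1 : (1:ℝ) ∈ Set.Ioi (0:ℝ) := Set.mem_Ioi.mpr one_pos
  have hcc := strictConcaveOn_log_Ioi.concaveOn.2 hr h1 hlam hmu hsum
  simp only [smul_eq_mul, Real.log_one, mul_one] at hcc
  have hmix : x / (x + k) * (y / x) + k / (x + k) = (y + k) / (x + k) := by
    field_simp
  rw [hmix, Real.log_div hyk.ne' hxk.ne', Real.log_div hy.ne' hx.ne'] at hcc
  nlinarith [hcc]

lemma log_decomp (C n : ℕ) (c : Fin C → ℕ) (α : Fin C → ℝ) (hα : ∀ j, 0 < α j)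
    (hS : 0 < ∑ j, α j) :
    Real.log ((Real.Gamma (∑ j, α j) * Real.Gamma ((n : ℝ) + 1)
        / Real.Gamma ((n : ℝ) + ∑ j, α j))
      * ∏ j, Real.Gamma ((c j : ℝ) + α j)
          / (Real.Gamma (α j) * Real.Gamma ((c j : ℝ) + 1)))
    = Real.log (Real.Gamma ((n : ℝ) + 1))
      - (∑ k ∈ range n, Real.log ((∑ j, α j) + k))
      + (∑ j, ∑ k ∈ range (c j), Real.log (α j + k))
      - ∑ j, Real.log (Real.Gamma ((c j : ℝ) + 1)) := by
  have hG : ∀ {x : ℝ}, 0 < x → 0 < Real.Gamma x := fun h => Real.Gamma_pos_of_pos h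
  have hn1 : (0:ℝ) < (n:ℝ) + 1 := by positivity
  have hnS : (0:ℝ) < (n:ℝ) + ∑ j, α j := by positivity
  have hY : ∀ j, 0 < Real.Gamma ((c j : ℝ) + α j)
      / (Real.Gamma (α j) * Real.Gamma ((c j : ℝ) + 1)) := fun j => by
    have h1 : (0:ℝ) < (c j : ℝ) + α j := add_pos_of_nonneg_of_pos (Nat.cast_nonneg _) (hα j)
    have h2 : (0:ℝ) < (c j : ℝ) + 1 := by positivity
    exact div_pos (hG h1) (mul_pos (hG (hα j)) (hG h2))
  have hX : 0 < Real.Gamma (∑ j, α j) * Real.Gamma ((n : ℝ) + 1)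
      / Real.Gamma ((n : ℝ) + ∑ j, α j) :=
    div_pos (mul_pos (hG hS) (hG hn1)) (hG hnS)
  have hP : 0 < ∏ j, Real.Gamma ((c j : ℝ) + α j)
      / (Real.Gamma (α j) * Real.Gamma ((c j : ℝ) + 1)) := prod_pos fun j _ => hY j
  rw [Real.log_mul hX.ne' hP.ne', Real.log_div (mul_pos (hG hS) (hG hn1)).ne' (hG hnS).ne',
    Real.log_mul (hG hS).ne' (hG hn1).ne', Real.log_prod fun j _ => (hY j).ne']
  have hterm : ∀ j : Fin C, Real.log (Real.Gamma ((c j : ℝ) + α j)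
      / (Real.Gamma (α j) * Real.Gamma ((c j : ℝ) + 1)))
      = (∑ k ∈ range (c j), Real.log (α j + k)) - Real.log (Real.Gamma ((c j : ℝ) + 1)) := by
    intro j
    have h2 : (0:ℝ) < (c j : ℝ) + 1 := by positivity
    have h1 : (0:ℝ) < (c j : ℝ) + α j := add_pos_of_nonneg_of_pos (Nat.cast_nonneg _) (hα j)
    rw [Real.log_div (hG h1).ne'
        (mul_pos (hG (hα j)) (hG h2)).ne',
      Real.log_mul (hG (hα j)).ne' (hG h2).ne', log_gamma_nat_add (c j) (hα j)]
    ring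
  rw [sum_congr rfl fun j _ => hterm j, sum_sub_distrib, log_gamma_nat_add n hS]
  ring

/-- Minorization step of Minka's fixed-point iteration: the Dirichlet-Multinomial
log-likelihood is bounded below by `D + (1 − α₀) b + Σⱼ aⱼ log αⱼ`, with equality at
`α = α̂`, where `aⱼ = (ψ(cⱼ + α̂ⱼ) − ψ(α̂ⱼ)) α̂ⱼ`, `b = ψ(n + α̂₀) − ψ(α̂₀)`, and `D`
does not depend on `α`. -/
theorem dirichletMultinomial_minorization (C n : ℕ) (hn : 1 ≤ n)
    (c : Fin C → ℕ) (hc : ∑ j, c j = n)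
    (αhat : Fin C → ℝ) (hαhat : ∀ j, 0 < αhat j) :
    ∃ D : ℝ,
      (∀ α : Fin C → ℝ, (∀ j, 0 < α j) →
        D + (1 - ∑ j, α j) * (digamma ((n : ℝ) + ∑ j, αhat j) - digamma (∑ j, αhat j))
            + ∑ j, ((digamma ((c j : ℝ) + αhat j) - digamma (αhat j)) * αhat j)
                * Real.log (α j)
          ≤ Real.log ((Real.Gamma (∑ j, α j) * Real.Gamma ((n : ℝ) + 1)
                / Real.Gamma ((n : ℝ) + ∑ j, α j))
              * ∏ j, Real.Gamma ((c j : ℝ) + α j)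
                  / (Real.Gamma (α j) * Real.Gamma ((c j : ℝ) + 1))))
      ∧ Real.log ((Real.Gamma (∑ j, αhat j) * Real.Gamma ((n : ℝ) + 1)
              / Real.Gamma ((n : ℝ) + ∑ j, αhat j))
            * ∏ j, Real.Gamma ((c j : ℝ) + αhat j)
                / (Real.Gamma (αhat j) * Real.Gamma ((c j : ℝ) + 1)))
          = D + (1 - ∑ j, αhat j)
                * (digamma ((n : ℝ) + ∑ j, αhat j) - digamma (∑ j, αhat j))
            + ∑ j, ((digamma ((c j : ℝ) + αhat j) - digamma (αhat j)) * αhat j)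
                * Real.log (αhat j) := by
  have hC : 0 < C := by
    rcases Nat.eq_zero_or_pos C with h | h
    · subst h; simp at hc; omega
    · exact h
  have : Nonempty (Fin C) := ⟨⟨0, hC⟩⟩
  have hne : (univ : Finset (Fin C)).Nonempty := univ_nonempty
  have hA : 0 < ∑ j, αhat j := sum_pos (fun j _ => hαhat j) hne
  have hb : digamma ((n : ℝ) + ∑ j, αhat j) - digamma (∑ j, αhat j)
      = ∑ k ∈ range n, 1 / ((∑ j, αhat j) + k) := by
    rw [digamma_rec n hA]; ring
  have ha : ∀ j, digamma ((c j : ℝ) + αhat j) - digamma (αhat j)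
      = ∑ k ∈ range (c j), 1 / (αhat j + k) := fun j => by
    rw [digamma_rec (c j) (hαhat j)]; ring
  refine ⟨Real.log ((Real.Gamma (∑ j, αhat j) * Real.Gamma ((n : ℝ) + 1)
              / Real.Gamma ((n : ℝ) + ∑ j, αhat j))
            * ∏ j, Real.Gamma ((c j : ℝ) + αhat j)
                / (Real.Gamma (αhat j) * Real.Gamma ((c j : ℝ) + 1)))
      - (1 - ∑ j, αhat j)
          * (digamma ((n : ℝ) + ∑ j, αhat j) - digamma (∑ j, αhat j))
      - ∑ j, ((digamma ((c j : ℝ) + αhat j) - digamma (αhat j)) * αhat j)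
          * Real.log (αhat j), ?_, by ring⟩
  intro α hα
  have hSα : 0 < ∑ j, α j := sum_pos (fun j _ => hα j) hne
  have hca : ∀ β : Fin C → ℝ,
      ∑ j, ((digamma ((c j : ℝ) + αhat j) - digamma (αhat j)) * αhat j) * Real.log (β j)
      = ∑ j, (αhat j * ∑ k ∈ range (c j), 1 / (αhat j + k)) * Real.log (β j) :=
    fun β => sum_congr rfl fun j _ => by rw [ha j]; ring
  rw [log_decomp C n c α hα hSα, log_decomp C n c αhat hαhat hA, hb, hca α, hca αhat]
  -- abbreviations
  have I1 : ((∑ j, αhat j) - (∑ j, α j)) * (∑ k ∈ range n, 1 / ((∑ j, αhat j) + k))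
      ≤ (∑ k ∈ range n, Real.log ((∑ j, αhat j) + k))
        - (∑ k ∈ range n, Real.log ((∑ j, α j) + k)) := by
    calc ((∑ j, αhat j) - (∑ j, α j)) * (∑ k ∈ range n, 1 / ((∑ j, αhat j) + k))
        = ∑ k ∈ range n, ((∑ j, αhat j) - (∑ j, α j)) * (1 / ((∑ j, αhat j) + k)) :=
          mul_sum _ _ _
      _ ≤ ∑ k ∈ range n,
            (Real.log ((∑ j, αhat j) + k) - Real.log ((∑ j, α j) + k)) := by
          refine sum_le_sum fun (k : ℕ) _ => ?_
          have hk : (0:ℝ) ≤ (k:ℝ) := Nat.cast_nonneg k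
          have h := tangent_upper hA hSα hk
          have e : ((∑ j, αhat j) - (∑ j, α j)) * (1 / ((∑ j, αhat j) + k))
              = -(((∑ j, α j) - (∑ j, αhat j)) / ((∑ j, αhat j) + k)) := by ring
          linarith
      _ = _ := sum_sub_distrib _ _
  have I2 : (∑ j, (αhat j * ∑ k ∈ range (c j), 1 / (αhat j + k)) * Real.log (α j))
        - (∑ j, (αhat j * ∑ k ∈ range (c j), 1 / (αhat j + k)) * Real.log (αhat j))
      ≤ (∑ j, ∑ k ∈ range (c j), Real.log (α j + k))
        - (∑ j, ∑ k ∈ range (c j), Real.log (αhat j + k)) := by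
    rw [← sum_sub_distrib (f := fun j => (αhat j * ∑ k ∈ range (c j), 1 / (αhat j + k)) * Real.log (α j)),
      ← sum_sub_distrib (f := fun j => ∑ k ∈ range (c j), Real.log (α j + k))]
    refine sum_le_sum fun j _ => ?_
    have step : (αhat j * ∑ k ∈ range (c j), 1 / (αhat j + k))
        * (Real.log (α j) - Real.log (αhat j))
        = ∑ k ∈ range (c j), (αhat j * (1 / (αhat j + k)))
            * (Real.log (α j) - Real.log (αhat j)) := by
      rw [mul_sum, sum_mul]
    have hbound : ∑ k ∈ range (c j), (αhat j * (1 / (αhat j + k)))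
          * (Real.log (α j) - Real.log (αhat j))
        ≤ ∑ k ∈ range (c j), (Real.log (α j + k) - Real.log (αhat j + k)) := by
      refine sum_le_sum fun k _ => ?_
      have hk : (0:ℝ) ≤ (k:ℝ) := Nat.cast_nonneg k
      have h := tangent_lower (hαhat j) (hα j) hk
      have e : (αhat j * (1 / (αhat j + k))) * (Real.log (α j) - Real.log (αhat j))
          = (αhat j / (αhat j + k)) * (Real.log (α j) - Real.log (αhat j)) := by ring
      linarith
    rw [sum_sub_distrib] at hbound
    nlinarith [step, hbound]
  linarith
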